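/- Let X ⊆ {0,1}^n be a nonempty finite set, let ξ̂_1,…,ξ̂_N ∈ ℝ^n_+ be cost realizations, let α ∈ (0,1], ε ≥ 0, q ∈ [1,∞], and set γ = min{N, 1/α}. Suppose x' ∈ X minimizes the function x ↦ (1/N) Σ_{i=1}^N ξ̂_iᵀx + ε ‖x‖_{q'} over X. Then x' is a γ-approximate solution to the problem of minimizing x ↦ CVaR^α(ξ̂_1ᵀx,…,ξ̂_Nᵀx) + γ ε ‖x‖_{q'} over X; that is, for every x ∈ X, CVaR^α(ξ̂_1ᵀx',…,ξ̂_Nᵀx') + γ ε ‖x'‖_{q'} ≤ γ · ( CVaR^α(ξ̂_1ᵀx,…,ξ̂_Nᵀx) + γ ε ‖x‖_{q'} ). -/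

import Mathlib

open scoped BigOperators ENNReal

/-- Conditional Value at Risk of the values `c 1, …, c N` at risk level `α`:
`CVaR^α(c) = inf_{t ∈ ℝ} ( t + (1/(α N)) Σ_i max(c i − t, 0) )`. -/
noncomputable def cvar (N : ℕ) (α : ℝ) (c : Fin N → ℝ) : ℝ :=
  ⨅ t : ℝ, (t + 1 / (α * N) * ∑ i, max (c i - t) 0)

/-- The `q`-norm on `ℝ^n`, for an exponent `q ∈ [1,∞]` (represented as `ℝ≥0∞`). -/
noncomputable def qnorm {n : ℕ} (q : ℝ≥0∞) (v : Fin n → ℝ) : ℝ :=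
  if q = ⊤ then ⨆ i, |v i| else (∑ i, |v i| ^ q.toReal) ^ (1 / q.toReal)

lemma qnorm_nonneg {n : ℕ} (q : ℝ≥0∞) (v : Fin n → ℝ) : 0 ≤ qnorm q v := by
  unfold qnorm
  split
  · exact Real.iSup_nonneg fun i => abs_nonneg _
  · apply Real.rpow_nonneg
    exact Finset.sum_nonneg fun i _ => Real.rpow_nonneg (abs_nonneg _) _

lemma cvar_term_ge {N : ℕ} (hN : 0 < N) {α : ℝ} (hα0 : 0 < α) (hα1 : α ≤ 1)
    (c : Fin N → ℝ) (t : ℝ) :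
    (1 / (N : ℝ)) * ∑ i, c i ≤ t + 1 / (α * N) * ∑ i, max (c i - t) 0 := by
  have hNpos : (0:ℝ) < N := by exact_mod_cast hN
  have hs : ∑ i, (c i - t) ≤ ∑ i, max (c i - t) 0 :=
    Finset.sum_le_sum fun i _ => le_max_left _ _
  have hs0 : (0:ℝ) ≤ ∑ i, max (c i - t) 0 :=
    Finset.sum_nonneg fun i _ => le_max_right _ _
  have h1 : (1:ℝ)/N * ∑ i, (c i - t) ≤ 1/(α*N) * ∑ i, max (c i - t) 0 := by
    calc (1:ℝ)/N * ∑ i, (c i - t) ≤ 1/N * ∑ i, max (c i - t) 0 :=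
          mul_le_mul_of_nonneg_left hs (by positivity)
      _ ≤ 1/(α*N) * ∑ i, max (c i - t) 0 := by
          apply mul_le_mul_of_nonneg_right _ hs0
          rw [div_le_div_iff₀ hNpos (by positivity)]
          nlinarith
  have h2 : (1:ℝ)/N * ∑ i, (c i - t) = 1/N * ∑ i, c i - t := by
    rw [Finset.sum_sub_distrib, Finset.sum_const, Finset.card_univ, Fintype.card_fin, nsmul_eq_mul]
    field_simp
  linarith

lemma cvar_bddBelow {N : ℕ} (hN : 0 < N) {α : ℝ} (hα0 : 0 < α) (hα1 : α ≤ 1)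
    (c : Fin N → ℝ) :
    BddBelow (Set.range fun t : ℝ => t + 1 / (α * N) * ∑ i, max (c i - t) 0) := by
  refine ⟨(1 / (N : ℝ)) * ∑ i, c i, ?_⟩
  rintro y ⟨t, rfl⟩
  exact cvar_term_ge hN hα0 hα1 c t

lemma mean_le_cvar {N : ℕ} (hN : 0 < N) {α : ℝ} (hα0 : 0 < α) (hα1 : α ≤ 1)
    (c : Fin N → ℝ) :
    (1 / (N : ℝ)) * ∑ i, c i ≤ cvar N α c :=
  le_ciInf (cvar_term_ge hN hα0 hα1 c)

lemma cvar_le_mean {N : ℕ} (hN : 0 < N) {α : ℝ} (hα0 : 0 < α) (hα1 : α ≤ 1)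
    (c : Fin N → ℝ) (hc : ∀ i, 0 ≤ c i) :
    cvar N α c ≤ min (N : ℝ) (1/α) * ((1 / (N : ℝ)) * ∑ i, c i) := by
  have hNpos : (0:ℝ) < N := by exact_mod_cast hN
  have hbdd := cvar_bddBelow hN hα0 hα1 c
  rcases le_total (N : ℝ) (1/α) with h | h
  · rw [min_eq_left h]
    have := ciInf_le hbdd (∑ i, c i)
    have hz : ∀ i, max (c i - ∑ i, c i) 0 = 0 := by
      intro i
      have : c i ≤ ∑ i, c i :=
        Finset.single_le_sum (fun j _ => hc j) (Finset.mem_univ i)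
      simp [max_eq_right, sub_nonpos.mpr this]
    simp only [hz, Finset.sum_const_zero, mul_zero, add_zero] at this
    calc cvar N α c ≤ ∑ i, c i := this
      _ = (N:ℝ) * (1/N * ∑ i, c i) := by field_simp
  · rw [min_eq_right h]
    have := ciInf_le hbdd 0
    have hz : ∀ i, max (c i - 0) 0 = c i := by
      intro i; simp [max_eq_left (hc i)]
    simp only [hz] at this
    calc cvar N α c ≤ 0 + 1/(α*N) * ∑ i, c i := this
      _ = 1/α * (1/N * ∑ i, c i) := by field_simp; ring

/-- Let `X` be a nonempty finite subset of `{0,1}^n`, `ξ̂_1,…,ξ̂_N ∈ ℝ^n_+`,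
`α ∈ (0,1]`, `ε ≥ 0`, `q ∈ [1,∞]` with dual exponent `q'` (`1/q + 1/q' = 1`), and
`γ = min{N, 1/α}`.  If `x'` minimizes `x ↦ (1/N) Σ_i ξ̂_iᵀx + ε‖x‖_{q'}` over `X`, then `x'`
is a `γ`-approximate solution to minimizing `x ↦ CVaR^α(ξ̂_1ᵀx,…,ξ̂_Nᵀx) + γ ε ‖x‖_{q'}`. -/
theorem stmt_6 (n N : ℕ) (hN : 0 < N) (X : Finset (Fin n → ℝ)) (hXne : X.Nonempty)
    (hXbin : ∀ x ∈ X, ∀ j, x j = 0 ∨ x j = 1)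
    (ξ : Fin N → Fin n → ℝ) (hξ : ∀ i j, 0 ≤ ξ i j)
    (α : ℝ) (hα0 : 0 < α) (hα1 : α ≤ 1) (ε : ℝ) (hε : 0 ≤ ε)
    (q q' : ℝ≥0∞) (hq : 1 ≤ q) (hdual : 1 / q + 1 / q' = 1)
    (x' : Fin n → ℝ) (hx' : x' ∈ X)
    (hopt : ∀ x ∈ X,
      (1 / (N : ℝ)) * (∑ i, ∑ j, ξ i j * x' j) + ε * qnorm q' x' ≤
        (1 / (N : ℝ)) * (∑ i, ∑ j, ξ i j * x j) + ε * qnorm q' x) :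
    ∀ x ∈ X,
      cvar N α (fun i => ∑ j, ξ i j * x' j) + min (N : ℝ) (1 / α) * ε * qnorm q' x' ≤
        min (N : ℝ) (1 / α) *
          (cvar N α (fun i => ∑ j, ξ i j * x j) + min (N : ℝ) (1 / α) * ε * qnorm q' x) := by
  intro x hx
  set γ := min (N : ℝ) (1 / α) with hγ
  have hN1 : (1:ℝ) ≤ N := by exact_mod_cast hN
  have hγ1 : 1 ≤ γ := le_min hN1 (by rw [le_div_iff₀ hα0]; linarith)
  have hγ0 : 0 ≤ γ := le_trans zero_le_one hγ1
  have hxnn : ∀ j, 0 ≤ x j := fun j => by rcases hXbin x hx j with h | h <;> simp [h]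
  have hx'nn : ∀ j, 0 ≤ x' j := fun j => by rcases hXbin x' hx' j with h | h <;> simp [h]
  have hc : ∀ i, 0 ≤ ∑ j, ξ i j * x j :=
    fun i => Finset.sum_nonneg fun j _ => mul_nonneg (hξ i j) (hxnn j)
  have hc' : ∀ i, 0 ≤ ∑ j, ξ i j * x' j :=
    fun i => Finset.sum_nonneg fun j _ => mul_nonneg (hξ i j) (hx'nn j)
  have h1 : cvar N α (fun i => ∑ j, ξ i j * x' j) ≤
      γ * ((1 / (N : ℝ)) * ∑ i, ∑ j, ξ i j * x' j) :=
    cvar_le_mean hN hα0 hα1 _ hc'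
  have h2 : (1 / (N : ℝ)) * ∑ i, ∑ j, ξ i j * x j ≤
      cvar N α (fun i => ∑ j, ξ i j * x j) :=
    mean_le_cvar hN hα0 hα1 _
  have hr : 0 ≤ qnorm q' x := qnorm_nonneg q' x
  have hr' : 0 ≤ qnorm q' x' := qnorm_nonneg q' x'
  have hA : γ * ((1 / (N : ℝ)) * (∑ i, ∑ j, ξ i j * x' j) + ε * qnorm q' x') ≤
      γ * ((1 / (N : ℝ)) * (∑ i, ∑ j, ξ i j * x j) + ε * qnorm q' x) :=
    mul_le_mul_of_nonneg_left (hopt x hx) hγ0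
  have hεr : ε * qnorm q' x ≤ γ * ε * qnorm q' x := by
    nlinarith [mul_nonneg hε hr]
  have hB : γ * ((1 / (N : ℝ)) * (∑ i, ∑ j, ξ i j * x j) + ε * qnorm q' x) ≤
      γ * (cvar N α (fun i => ∑ j, ξ i j * x j) + γ * ε * qnorm q' x) :=
    mul_le_mul_of_nonneg_left (by linarith) hγ0
  nlinarith [h1, hA, hB, mul_nonneg (mul_nonneg hγ0 hε) hr']
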